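/- Fix integers p ≥ 3 and q ≥ 2 with q ≡ 1 (mod p). For all non-negative integers x and y, the Grundy value of (x,y) in the (p,q)-restricted Ryūō Nim is: 𝒢(x,y) = q if x ≡ 0 (mod q), y ≡ 0 (mod q), x ≠ 0 and y ≠ 0; and otherwise 𝒢(x,y) = mod(mod(x,q) + mod(y,q), p) + p·(⌊mod(x,q)/p⌋ ⊕ ⌊mod(y,q)/p⌋). -/

import Mathlib

/-- The minimum excluded value of a set of natural numbers. -/
noncomputable def mex (S : Set ℕ) : ℕ := sInf {n : ℕ | n ∉ S}

/-- Moves of the restricted Ryūō Nim: diagonal moves remove a total of at most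
`p - 1` tokens, horizontal moves remove at most `q - 1` tokens, and vertical
moves remove at most `r - 1` tokens. -/
def resMove (p q r : ℕ) (pos : ℕ × ℕ) : Set (ℕ × ℕ) :=
  {a | ∃ s : ℕ, 1 ≤ s ∧ s ≤ pos.1 ∧ s ≤ q - 1 ∧ a = (pos.1 - s, pos.2)} ∪
  {a | ∃ t : ℕ, 1 ≤ t ∧ t ≤ pos.2 ∧ t ≤ r - 1 ∧ a = (pos.1, pos.2 - t)} ∪
  {a | ∃ s t : ℕ, 1 ≤ s ∧ s ≤ pos.1 ∧ 1 ≤ t ∧ t ≤ pos.2 ∧ s + t ≤ p - 1 ∧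
        a = (pos.1 - s, pos.2 - t)}

private lemma mexEq {S : Set ℕ} {n : ℕ} (h1 : n ∉ S) (h2 : ∀ m, m < n → m ∈ S) :
    mex S = n := by
  have hmem : sInf {m : ℕ | m ∉ S} ∈ {m : ℕ | m ∉ S} := Nat.sInf_mem ⟨n, h1⟩
  have hle : sInf {m : ℕ | m ∉ S} ≤ n := Nat.sInf_le h1
  rcases lt_or_eq_of_le hle with h | h
  · exact absurd (h2 _ h) hmem
  · exact h

private lemma modp {p : ℕ} (hp : 0 < p) (j r : ℕ) (h : r < p) : (p * j + r) % p = r := by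
  rw [Nat.mul_add_mod, Nat.mod_eq_of_lt h]

private lemma divP {p : ℕ} (hp : 0 < p) (j r : ℕ) (h : r < p) : (p * j + r) / p = j := by
  rw [Nat.mul_add_div hp, Nat.div_eq_of_lt h, add_zero]

private lemma subModLe {x s q : ℕ} (hq : 0 < q) (hs : s ≤ x % q) :
    (x - s) % q = x % q - s := by
  have h1 : q * (x / q) + x % q = x := Nat.div_add_mod x q
  have h2 : x % q < q := Nat.mod_lt _ hq
  have h3 : x - s = q * (x / q) + (x % q - s) := by omega
  rw [h3, Nat.mul_add_mod, Nat.mod_eq_of_lt (by omega)]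

private lemma subModGt {x s q : ℕ} (h1 : x % q < s) (h2 : s ≤ x) (h3 : s < q) :
    (x - s) % q = x % q + q - s := by
  have h5 : x % q < q := Nat.mod_lt _ (by omega)
  obtain ⟨u, hu⟩ : ∃ u, x = q * u + x % q := ⟨x / q, (Nat.div_add_mod x q).symm⟩
  match u, hu with
  | 0, hu =>
    rw [Nat.mul_zero, Nat.zero_add] at hu
    omega
  | j+1, hu =>
    have hr : q * (j+1) = q * j + q := by ring
    have h8 : x - s = q * j + (x % q + q - s) := by omega
    rw [h8, Nat.mul_add_mod, Nat.mod_eq_of_lt (by omega)]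

private def gg (p a b : ℕ) : ℕ := (a + b) % p + p * (a / p ^^^ b / p)

private lemma ggMod {p : ℕ} (hp : 0 < p) (a b : ℕ) : gg p a b % p = (a + b) % p := by
  unfold gg
  rw [Nat.add_mul_mod_self_left, Nat.mod_eq_of_lt (Nat.mod_lt _ hp)]

private lemma ggDiv {p : ℕ} (hp : 0 < p) (a b : ℕ) : gg p a b / p = a / p ^^^ b / p := by
  unfold gg
  rw [Nat.add_mul_div_left _ _ hp, Nat.div_eq_of_lt (Nat.mod_lt _ hp), zero_add]

private lemma modAddCongr {p : ℕ} (c : ℕ) {a b : ℕ} (h : a % p = b % p) :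
    (a + c) % p = (b + c) % p := Nat.ModEq.add_right c h

private lemma dvdOfModAdd {p x w : ℕ} (h : x % p = (x + w) % p) : p ∣ w := by
  have := (Nat.modEq_iff_dvd' (Nat.le_add_right x w)).mp h
  simpa using this

private lemma ggLeftInj {p a a' b : ℕ} (hp : 0 < p) (h : gg p a b = gg p a' b) : a = a' := by
  have h1 : (a + b) % p = (a' + b) % p := by
    rw [← ggMod hp a b, ← ggMod hp a' b, h]
  have h2 : a / p ^^^ b / p = a' / p ^^^ b / p := by
    rw [← ggDiv hp a b, ← ggDiv hp a' b, h]
  have h3 : a / p = a' / p := by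
    have := congrArg (fun z => z ^^^ b / p) h2
    simpa [Nat.xor_assoc, Nat.xor_self, xor_cancel_right] using this
  have h4 : a % p = a' % p := Nat.ModEq.add_right_cancel' b h1
  have h5 : p * (a / p) + a % p = a := Nat.div_add_mod a p
  have h6 : p * (a' / p) + a' % p = a' := Nat.div_add_mod a' p
  rw [h3] at h5
  omega

private lemma ggComm (p a b : ℕ) : gg p a b = gg p b a := by
  unfold gg; rw [Nat.add_comm a b, Nat.xor_comm]

private lemma ggRightInj {p a b b' : ℕ} (hp : 0 < p) (h : gg p a b = gg p a b') : b = b' := by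
  rw [ggComm p a b, ggComm p a b'] at h
  exact ggLeftInj hp h

private lemma ggA0 {p : ℕ} (hp : 0 < p) (a : ℕ) : gg p a 0 = a := by
  unfold gg
  simp [Nat.zero_div, Nat.xor_zero, Nat.mod_add_div]

private def VV (p q x y : ℕ) : ℕ :=
  if x % q = 0 ∧ y % q = 0 ∧ x ≠ 0 ∧ y ≠ 0 then q
  else gg p (x % q) (y % q)

private lemma VVpos {p q x y : ℕ} (h : x % q = 0 ∧ y % q = 0 ∧ x ≠ 0 ∧ y ≠ 0) :
    VV p q x y = q := if_pos h

private lemma VVneg {p q x y : ℕ} (h : ¬(x % q = 0 ∧ y % q = 0 ∧ x ≠ 0 ∧ y ≠ 0)) :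
    VV p q x y = gg p (x % q) (y % q) := if_neg h

private lemma VVcomm (p q x y : ℕ) : VV p q x y = VV p q y x := by
  unfold VV
  rw [ggComm]
  by_cases h : x % q = 0 ∧ y % q = 0 ∧ x ≠ 0 ∧ y ≠ 0
  · rw [if_pos h, if_pos (by tauto)]
  · rw [if_neg h, if_neg (by tauto)]

private lemma qfacts {p q : ℕ} (hp : 3 ≤ p) (hq : 2 ≤ q) (hqp : q % p = 1) :
    ∃ k, q = p * k + 1 ∧ 1 ≤ k ∧ p + 1 ≤ q := by
  have h1 : p * (q / p) + q % p = q := Nat.div_add_mod q p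
  rw [hqp] at h1
  have hk : 1 ≤ q / p := by
    rcases Nat.eq_zero_or_pos (q / p) with h0 | h0
    · rw [h0, Nat.mul_zero] at h1
      omega
    · exact h0
  refine ⟨q / p, h1.symm, hk, ?_⟩
  calc p + 1 = p * 1 + 1 := by ring
    _ ≤ p * (q / p) + 1 := Nat.add_le_add_right (Nat.mul_le_mul_left p hk) 1
    _ = q := h1

private lemma keyIh {p q : ℕ} (hp : 3 ≤ p) (hq : 2 ≤ q) (hqp : q % p = 1)
    (x y s : ℕ) (hs1 : 1 ≤ s) (hs2 : s ≤ x) (hs3 : s ≤ q - 1) :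
    VV p q (x - s) y ≠ VV p q x y := by
  have hp0 : 0 < p := by omega
  have hq0 : 0 < q := by omega
  have haq : x % q < q := Nat.mod_lt _ hq0
  by_cases hA : x % q = 0 ∧ y % q = 0 ∧ x ≠ 0 ∧ y ≠ 0
  · rw [VVpos hA]
    have hxs : (x - s) % q = q - s := by
      have := subModGt (by omega : x % q < s) hs2 (by omega)
      omega
    rw [VVneg (by rw [hxs]; rintro ⟨h, -⟩; omega)]
    rw [hxs, hA.2.1, ggA0 hp0]
    omega
  · rw [VVneg hA]
    by_cases hs : s ≤ x % q
    · have hxs : (x - s) % q = x % q - s := subModLe hq0 hs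
      by_cases hA' : (x - s) % q = 0 ∧ y % q = 0 ∧ x - s ≠ 0 ∧ y ≠ 0
      · rw [VVpos hA']
        rw [hA'.2.1, ggA0 hp0]
        omega
      · rw [VVneg hA', hxs]
        intro hcon
        have := ggLeftInj hp0 hcon
        omega
    · have hxs : (x - s) % q = x % q + q - s := subModGt (by omega) hs2 (by omega)
      rw [VVneg (by rw [hxs]; rintro ⟨h, -⟩; omega)]
      rw [hxs]
      intro hcon
      have := ggLeftInj hp0 hcon
      omega

private lemma keyId {p q : ℕ} (hp : 3 ≤ p) (hq : 2 ≤ q) (hqp : q % p = 1)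
    (x y s t : ℕ) (hs1 : 1 ≤ s) (hs2 : s ≤ x) (ht1 : 1 ≤ t) (ht2 : t ≤ y)
    (hst : s + t ≤ p - 1) :
    VV p q (x - s) (y - t) ≠ VV p q x y := by
  have hp0 : 0 < p := by omega
  have hq0 : 0 < q := by omega
  obtain ⟨k, hqk, hk1, hpq⟩ := qfacts hp hq hqp
  have haq : x % q < q := Nat.mod_lt _ hq0
  have hbq : y % q < q := Nat.mod_lt _ hq0
  have hsq : s < q := by omega
  have htq : t < q := by omega
  by_cases hA : x % q = 0 ∧ y % q = 0 ∧ x ≠ 0 ∧ y ≠ 0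
  · rw [VVpos hA]
    have hxs : (x - s) % q = q - s := by
      have := subModGt (by omega : x % q < s) hs2 hsq
      omega
    have hyt : (y - t) % q = q - t := by
      have := subModGt (by omega : y % q < t) ht2 htq
      omega
    rw [VVneg (by rw [hxs]; rintro ⟨h, -⟩; omega), hxs, hyt]
    intro hcon
    have h1 : (q - s + (q - t)) % p = q % p := by rw [← ggMod hp0, hcon]
    have h2 := modAddCongr (p := p) (s + t) h1
    have h3 : q - s + (q - t) + (s + t) = q + q := by omega
    have h4 : (q + q) % p = 2 := by
      have hr : p * (k + k) = p * k + p * k := by ring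
      have h5 : q + q = p * (k + k) + 2 := by omega
      rw [h5, modp hp0 _ _ (by omega)]
    rw [h3, h4] at h2
    rcases lt_or_eq_of_le (show 1 + (s + t) ≤ p by omega) with h6 | h6
    · have h7 : q + (s + t) = p * k + (1 + (s + t)) := by omega
      rw [h7, modp hp0 _ _ h6] at h2
      omega
    · have hr : p * (k + 1) = p * k + p := by ring
      have h7 : q + (s + t) = p * (k + 1) + 0 := by omega
      rw [h7, modp hp0 _ _ (by omega)] at h2
      omega
  · rw [VVneg hA]
    by_cases hsa : s ≤ x % q
    · by_cases htb : t ≤ y % q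
      · -- no wrap
        have hxs : (x - s) % q = x % q - s := subModLe hq0 hsa
        have hyt : (y - t) % q = y % q - t := subModLe hq0 htb
        by_cases hA' : (x - s) % q = 0 ∧ (y - t) % q = 0 ∧ x - s ≠ 0 ∧ y - t ≠ 0
        · rw [VVpos hA']
          have hax : x % q = s := by omega
          have hby : y % q = t := by omega
          intro hcon
          unfold gg at hcon
          rw [hax, hby, Nat.div_eq_of_lt (by omega : s < p),
            Nat.div_eq_of_lt (by omega : t < p), Nat.xor_self, Nat.mul_zero, Nat.add_zero,
            Nat.mod_eq_of_lt (by omega)] at hcon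
          omega
        · rw [VVneg hA', hxs, hyt]
          intro hcon
          have h1 : (x % q - s + (y % q - t)) % p = (x % q + y % q) % p := by
            rw [← ggMod hp0, ← ggMod hp0, hcon]
          have h2 := modAddCongr (p := p) (s + t) h1
          have h3 : x % q - s + (y % q - t) + (s + t) = x % q + y % q := by omega
          rw [h3] at h2
          have h4 := dvdOfModAdd h2
          have h5 := Nat.le_of_dvd (by omega) h4
          omega
      · -- t wraps
        have hxs : (x - s) % q = x % q - s := subModLe hq0 hsa
        have hyt : (y - t) % q = y % q + q - t := subModGt (by omega) ht2 htq
        rw [VVneg (by rw [hyt]; rintro ⟨-, h, -⟩; omega), hxs, hyt]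
        intro hcon
        have h1 : (x % q - s + (y % q + q - t)) % p = (x % q + y % q) % p := by
          rw [← ggMod hp0, ← ggMod hp0, hcon]
        have h2 := modAddCongr (p := p) (s + t) h1
        have h3 : x % q - s + (y % q + q - t) + (s + t) = x % q + y % q + q := by omega
        rw [h3] at h2
        have h4 : (x % q + y % q + q) % p = (x % q + y % q + 1) % p := by
          have h5 : x % q + y % q + q = x % q + y % q + 1 + p * k := by omega
          rw [h5, Nat.add_mul_mod_self_left]
        rw [h4] at h2
        have h6 : x % q + y % q + (s + t) = x % q + y % q + 1 + (s + t - 1) := by omega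
        rw [h6] at h2
        have h7 := dvdOfModAdd h2
        have h8 := Nat.le_of_dvd (by omega) h7
        omega
    · by_cases htb : t ≤ y % q
      · -- s wraps
        have hxs : (x - s) % q = x % q + q - s := subModGt (by omega) hs2 hsq
        have hyt : (y - t) % q = y % q - t := subModLe hq0 htb
        rw [VVneg (by rw [hxs]; rintro ⟨h, -⟩; omega), hxs, hyt]
        intro hcon
        have h1 : (x % q + q - s + (y % q - t)) % p = (x % q + y % q) % p := by
          rw [← ggMod hp0, ← ggMod hp0, hcon]
        have h2 := modAddCongr (p := p) (s + t) h1
        have h3 : x % q + q - s + (y % q - t) + (s + t) = x % q + y % q + q := by omega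
        rw [h3] at h2
        have h4 : (x % q + y % q + q) % p = (x % q + y % q + 1) % p := by
          have h5 : x % q + y % q + q = x % q + y % q + 1 + p * k := by omega
          rw [h5, Nat.add_mul_mod_self_left]
        rw [h4] at h2
        have h6 : x % q + y % q + (s + t) = x % q + y % q + 1 + (s + t - 1) := by omega
        rw [h6] at h2
        have h7 := dvdOfModAdd h2
        have h8 := Nat.le_of_dvd (by omega) h7
        omega
      · -- both wrap
        have hxs : (x - s) % q = x % q + q - s := subModGt (by omega) hs2 hsq
        have hyt : (y - t) % q = y % q + q - t := subModGt (by omega) ht2 htq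
        by_cases hst2 : s + t = 2
        · exact absurd ⟨by omega, by omega, by omega, by omega⟩ hA
        · rw [VVneg (by rw [hxs]; rintro ⟨h, -⟩; omega), hxs, hyt]
          intro hcon
          have h1 : (x % q + q - s + (y % q + q - t)) % p = (x % q + y % q) % p := by
            rw [← ggMod hp0, ← ggMod hp0, hcon]
          have h2 := modAddCongr (p := p) (s + t) h1
          have h3 : x % q + q - s + (y % q + q - t) + (s + t) = x % q + y % q + (q + q) := by
            omega
          rw [h3] at h2
          have h4 : (x % q + y % q + (q + q)) % p = (x % q + y % q + 2) % p := by
            have hr : p * (k + k) = p * k + p * k := by ring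
            have h5 : x % q + y % q + (q + q) = x % q + y % q + 2 + p * (k + k) := by omega
            rw [h5, Nat.add_mul_mod_self_left]
          rw [h4] at h2
          have h6 : x % q + y % q + (s + t) = x % q + y % q + 2 + (s + t - 2) := by omega
          rw [h6] at h2
          have h7 := dvdOfModAdd h2
          have h8 := Nat.le_of_dvd (by omega) h7
          omega

private lemma keyI {p q : ℕ} (hp : 3 ≤ p) (hq : 2 ≤ q) (hqp : q % p = 1)
    (x y : ℕ) : ∀ r ∈ resMove p q q (x, y), VV p q r.1 r.2 ≠ VV p q x y := by
  rintro r ((⟨s, hs1, hs2, hs3, rfl⟩ | ⟨t, ht1, ht2, ht3, rfl⟩) |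
    ⟨s, t, hs1, hs2, ht1, ht2, hst, rfl⟩)
  · exact keyIh hp hq hqp x y s hs1 hs2 hs3
  · have h := keyIh hp hq hqp y x t ht1 ht2 ht3
    simp only [VVcomm p q x (y - t), VVcomm p q x y]
    exact h
  · exact keyId hp hq hqp x y s t hs1 hs2 ht1 ht2 hst

private lemma moveSwap {p q x y : ℕ} {r : ℕ × ℕ} (h : r ∈ resMove p q q (y, x)) :
    (r.2, r.1) ∈ resMove p q q (x, y) := by
  rcases h with ((⟨s, h1, h2, h3, h4⟩ | ⟨t, h1, h2, h3, h4⟩) | ⟨s, t, h1, h2, h3, h4, h5, h6⟩)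
  · exact Or.inl (Or.inr ⟨s, h1, h2, h3, by rw [h4]⟩)
  · exact Or.inl (Or.inl ⟨t, h1, h2, h3, by rw [h4]⟩)
  · exact Or.inr ⟨t, s, h3, h4, h1, h2, by omega, by rw [h6]⟩

private lemma geqq {x q : ℕ} (hq : 0 < q) (h1 : x % q = 0) (h2 : x ≠ 0) : q ≤ x := by
  rcases lt_or_ge x q with h | h
  · rw [Nat.mod_eq_of_lt h] at h1
    omega
  · exact h

private lemma lowSide {p q : ℕ} (hp : 3 ≤ p) (hq : 2 ≤ q) (hqp : q % p = 1)
    (x y w : ℕ) (hB0 : ¬(x % q = 0 ∧ y % q = 0 ∧ x ≠ 0 ∧ y ≠ 0))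
    (hside : w / p ^^^ y % q / p < x % q / p) :
    ∃ r ∈ resMove p q q (x, y), VV p q r.1 r.2 = w := by
  have hp0 : 0 < p := by omega
  have hq0 : 0 < q := by omega
  obtain ⟨k, hqk, hk1, hpq⟩ := qfacts hp hq hqp
  set a := x % q with ha
  set b := y % q with hb
  have haq : a < q := Nat.mod_lt _ hq0
  have hbq : b < q := Nat.mod_lt _ hq0
  have hax : a ≤ x := Nat.mod_le x q
  have hby : b ≤ y := Nat.mod_le y q
  set A := a / p with hA
  set B := b / p with hB
  set α := a % p with hα
  set β := b % p with hβ
  set d := w % p with hd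
  set nn := w / p with hnn
  have hαp : α < p := Nat.mod_lt _ hp0
  have hβp : β < p := Nat.mod_lt _ hp0
  have hdp : d < p := Nat.mod_lt _ hp0
  have hαa : α ≤ a := Nat.mod_le a p
  have haA : p * A + α = a := Nat.div_add_mod a p
  have hbB : p * B + β = b := Nat.div_add_mod b p
  have hwd : p * nn + d = w := Nat.div_add_mod w p
  set A' := nn ^^^ B with hA'
  have hA'A : A' < A := hside
  set α' := (d + p - β) % p with hα'
  have hα'p : α' < p := Nat.mod_lt _ hp0
  have hsum : (α' + β) % p = d := by
    rw [hα', Nat.mod_add_mod]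
    have h1 : d + p - β + β = p * 1 + d := by omega
    rw [h1, modp hp0 _ _ hdp]
  set a2 := p * A' + α' with ha2
  have hmul : p * (A' + 1) = p * A' + p := by ring
  have hmul2 : p * (A' + 1) ≤ p * A := Nat.mul_le_mul_left p hA'A
  have ha2a : a2 < a := by omega
  by_cases hz : a2 = 0 ∧ b = 0 ∧ x - (a - a2) ≠ 0 ∧ y ≠ 0
  · -- blocked: w = 0; use a vertical wrap move instead
    obtain ⟨hz1, hz2, hz3, hz4⟩ := hz
    have hpA' : p * A' = 0 := by omega
    have hA'0 : A' = 0 := by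
      rcases Nat.mul_eq_zero.mp hpA' with h | h
      · omega
      · exact h
    have hα'0 : α' = 0 := by omega
    have hβ0 : β = 0 := by omega
    have hB0' : B = 0 := by
      have hpB : p * B = 0 := by omega
      rcases Nat.mul_eq_zero.mp hpB with h | h
      · omega
      · exact h
    have hd0 : d = 0 := by
      have h1 : α' = d := by
        rw [hα', hβ0]
        have h2 : d + p - 0 = p * 1 + d := by omega
        rw [h2, modp hp0 _ _ hdp]
      omega
    have hnn0 : nn = 0 := by
      have : A' = nn := by rw [hA', hB0', Nat.xor_zero]
      omega
    have hw0 : w = 0 := by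
      rw [hnn0] at hwd
      omega
    have hA1 : 1 ≤ A := by omega
    have hyq : q ≤ y := geqq hq0 (by rw [← hb]; exact hz2) hz4
    set ε := (p - α) % p with hε
    have hεp : ε < p := Nat.mod_lt _ hp0
    set b2 := p * A + ε with hb2
    have hεkey : (α + ε) % p = 0 ∧ b2 ≤ p * k := by
      have hAk : A ≤ k := by
        by_contra hc
        have h1 : p * (k + 1) ≤ p * A := Nat.mul_le_mul_left p (by omega)
        have h2 : p * (k + 1) = p * k + p := by ring
        omega
      by_cases hα0 : α = 0
      · have he0 : ε = 0 := by rw [hε, hα0, Nat.sub_zero, Nat.mod_self]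
        have h3 : p * A ≤ p * k := Nat.mul_le_mul_left p hAk
        constructor
        · rw [hα0, he0]
          simp
        · omega
      · have he1 : ε = p - α := by rw [hε, Nat.mod_eq_of_lt (by omega)]
        have hAk2 : A < k := by
          have h4 : p * A < p * k := by omega
          exact Nat.lt_of_mul_lt_mul_left h4
        have h5 : p * (A + 1) ≤ p * k := Nat.mul_le_mul_left p (by omega)
        have h6 : p * (A + 1) = p * A + p := by ring
        constructor
        · have h7 : α + ε = p * 1 + 0 := by omega
          rw [h7, modp hp0 _ _ hp0]
        · omega
    obtain ⟨hεmod, hb2k⟩ := hεkey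
    have hb2pos : 1 ≤ b2 := by
      have h8 : p * 1 ≤ p * A := Nat.mul_le_mul_left p hA1
      omega
    have hb2q : b2 ≤ q - 1 := by omega
    set t2 := q - b2 with ht2
    refine ⟨(x, y - t2), Or.inl (Or.inr ⟨t2, by omega, by omega, by omega, rfl⟩), ?_⟩
    have hres2 : (y - t2) % q = b2 := by
      rw [subModGt (by rw [← hb, hz2]; omega) (by omega) (by omega)]
      rw [← hb, hz2]
      omega
    show VV p q x (y - t2) = w
    rw [VVneg (by rw [hres2]; rintro ⟨-, h, -⟩; omega), hres2, ← ha]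
    unfold gg
    have e1 : a + b2 = p * (A + A) + (α + ε) := by
      have hr : p * (A + A) = p * A + p * A := by ring
      omega
    have e2 : b2 / p = A := by rw [hb2]; exact divP hp0 _ _ hεp
    rw [e1, Nat.mul_add_mod, hεmod, ← hA, e2, Nat.xor_self, Nat.mul_zero]
    omega
  · -- unblocked: horizontal move to a2
    refine ⟨(x - (a - a2), y), Or.inl (Or.inl ⟨a - a2, by omega, by omega, by omega, rfl⟩), ?_⟩
    have hres : (x - (a - a2)) % q = a2 := by
      rw [subModLe hq0 (by omega)]
      omega
    show VV p q (x - (a - a2)) y = w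
    rw [VVneg (by rw [hres, ← hb]; exact hz), hres, ← hb]
    unfold gg
    have h1 : (a2 + b) % p = d := by
      rw [ha2, ← hbB]
      have h2 : p * A' + α' + (p * B + β) = p * (A' + B) + (α' + β) := by ring
      rw [h2, Nat.mul_add_mod, hsum]
    have h2 : a2 / p = A' := by rw [ha2]; exact divP hp0 _ _ hα'p
    rw [h1, h2, ← hB, hA', xor_cancel_right]
    omega

private lemma keyII {p q : ℕ} (hp : 3 ≤ p) (hq : 2 ≤ q) (hqp : q % p = 1)
    (x y w : ℕ) (hw : w < VV p q x y) :
    ∃ r ∈ resMove p q q (x, y), VV p q r.1 r.2 = w := by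
  have hp0 : 0 < p := by omega
  have hq0 : 0 < q := by omega
  obtain ⟨k, hqk, hk1, hpq⟩ := qfacts hp hq hqp
  by_cases hA : x % q = 0 ∧ y % q = 0 ∧ x ≠ 0 ∧ y ≠ 0
  · rw [VVpos hA] at hw
    obtain ⟨ha0, hb0, hx0, hy0⟩ := hA
    have hxq : q ≤ x := geqq hq0 ha0 hx0
    have hyq : q ≤ y := geqq hq0 hb0 hy0
    by_cases hw0 : w = 0
    · refine ⟨(x - 1, y - 1),
        Or.inr ⟨1, 1, le_refl 1, by omega, le_refl 1, by omega, by omega, rfl⟩, ?_⟩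
      have hr1 : (x - 1) % q = q - 1 := by
        have := subModGt (show x % q < 1 by omega) (by omega) (by omega)
        omega
      have hr2 : (y - 1) % q = q - 1 := by
        have := subModGt (show y % q < 1 by omega) (by omega) (by omega)
        omega
      show VV p q (x - 1) (y - 1) = w
      rw [VVneg (by rw [hr1]; rintro ⟨h, -⟩; omega), hr1, hr2]
      unfold gg
      have h1 : q - 1 + (q - 1) = p * (k + k) + 0 := by
        have hr : p * (k + k) = p * k + p * k := by ring
        omega
      have h2 : (q - 1) / p = k := by
        have h3 : q - 1 = p * k + 0 := by omega
        rw [h3]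
        exact divP hp0 _ _ hp0
      rw [h1, modp hp0 _ _ hp0, h2, Nat.xor_self, Nat.mul_zero]
      omega
    · refine ⟨(x - (q - w), y),
        Or.inl (Or.inl ⟨q - w, by omega, by omega, by omega, rfl⟩), ?_⟩
      have hr1 : (x - (q - w)) % q = w := by
        have := subModGt (show x % q < q - w by omega) (by omega) (by omega)
        omega
      show VV p q (x - (q - w)) y = w
      rw [VVneg (by rw [hr1]; rintro ⟨h, -⟩; exact hw0 h), hr1, hb0, ggA0 hp0]
  · rw [VVneg hA] at hw
    unfold gg at hw
    set a := x % q with ha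
    set b := y % q with hb
    have haq : a < q := Nat.mod_lt _ hq0
    have hbq : b < q := Nat.mod_lt _ hq0
    have hax : a ≤ x := Nat.mod_le x q
    have hby : b ≤ y := Nat.mod_le y q
    set A := a / p with hA2
    set B := b / p with hB2
    set α := a % p with hα
    set β := b % p with hβ
    set d := w % p with hd
    set nn := w / p with hnn
    set c := (a + b) % p with hc
    set m := A ^^^ B with hm
    have hαp : α < p := Nat.mod_lt _ hp0
    have hβp : β < p := Nat.mod_lt _ hp0
    have hdp : d < p := Nat.mod_lt _ hp0
    have hcp : c < p := Nat.mod_lt _ hp0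
    have hαa : α ≤ a := Nat.mod_le a p
    have hβb : β ≤ b := Nat.mod_le b p
    have haA : p * A + α = a := Nat.div_add_mod a p
    have hbB : p * B + β = b := Nat.div_add_mod b p
    have hwd : p * nn + d = w := Nat.div_add_mod w p
    have habmod : (α + β) % p = c := by
      rw [hc]
      conv_rhs => rw [← haA, ← hbB]
      have hr : p * A + α + (p * B + β) = p * (A + B) + (α + β) := by ring
      rw [hr, Nat.mul_add_mod]
    have hcap : c ≤ α + β := by
      have := Nat.mod_le (α + β) p
      omega
    rcases Nat.lt_trichotomy nn m with hcase | hcase | hcase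
    · -- nn < m : single-pile nim-style move
      rw [hm] at hcase
      rcases Nat.lt_xor_cases hcase with hside | hside
      · rw [hA2, hB2, hnn, ha, hb] at hside
        exact lowSide hp hq hqp x y w hA hside
      · rw [hA2, hB2, hnn, ha, hb] at hside
        obtain ⟨r, hr, hv⟩ := lowSide hp hq hqp y x w (by tauto) hside
        exact ⟨(r.2, r.1), moveSwap hr, by rw [VVcomm]; exact hv⟩
    · -- nn = m
      rw [hcase] at hwd
      have hdc : d < c := by omega
      set s := min α (c - d) with hs
      set t := c - d - s with ht
      have hsα : s ≤ α := by omega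
      have htβ : t ≤ β := by omega
      have hst : s + t = c - d := by omega
      have hres1 : (x - s) % q = a - s := subModLe hq0 (by omega)
      have hres2 : (y - t) % q = b - t := subModLe hq0 (by omega)
      have hval : gg p (a - s) (b - t) = w := by
        have e1 : a - s = p * A + (α - s) := by omega
        have e2 : b - t = p * B + (β - t) := by omega
        have hdiv1 : (a - s) / p = A := by rw [e1]; exact divP hp0 _ _ (by omega)
        have hdiv2 : (b - t) / p = B := by rw [e2]; exact divP hp0 _ _ (by omega)
        have hmod : (a - s + (b - t)) % p = d := by
          have hr : p * (A + B) = p * A + p * B := by ring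
          have e3 : a - s + (b - t) = p * (A + B) + (α + β - (c - d)) := by omega
          rw [e3, Nat.mul_add_mod]
          have e5 : α + β = c ∨ α + β = c + p := by
            have h6 := Nat.div_add_mod (α + β) p
            have h7 : (α + β) / p < 2 := Nat.div_lt_of_lt_mul (by omega)
            have h8 : (α + β) / p = 0 ∨ (α + β) / p = 1 := by
              generalize (α + β) / p = u at h7
              omega
            rcases h8 with h8 | h8 <;> rw [h8] at h6
            · left; omega
            · right; omega
          rcases e5 with e5 | e5
          · have e6 : α + β - (c - d) = p * 0 + d := by omega
            rw [e6, modp hp0 _ _ hdp]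
          · have e6 : α + β - (c - d) = p * 1 + d := by omega
            rw [e6, modp hp0 _ _ hdp]
        unfold gg
        rw [hmod, hdiv1, hdiv2, ← hm]
        omega
      by_cases hz : a - s = 0 ∧ b - t = 0 ∧ x - s ≠ 0 ∧ y - t ≠ 0
      · -- blocked : w = 0, x ≥ q, y ≥ q ; use a wrap move to value 0
        obtain ⟨hz1, hz2, hz3, hz4⟩ := hz
        have hsa : s = a := by omega
        have htb : t = b := by omega
        have hαa2 : a = α := by omega
        have hβb2 : b = β := by omega
        have hd0 : d = 0 := by omega
        have hcab : c = a + b := by omega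
        have hw0 : w = 0 := by
          have hA0 : A = 0 := by
            have h9 : p * A = 0 := by omega
            rcases Nat.mul_eq_zero.mp h9 with h | h
            · omega
            · exact h
          have hB0 : B = 0 := by
            have h9 : p * B = 0 := by omega
            rcases Nat.mul_eq_zero.mp h9 with h | h
            · omega
            · exact h
          have hm0 : m = 0 := by rw [hm, hA0, hB0]; rfl
          rw [hm0] at hwd
          omega
        have hxa : a < x := by omega
        have hyb : b < y := by omega
        have hxq : q ≤ x := by
          rcases lt_or_ge x q with h | h
          · rw [Nat.mod_eq_of_lt h] at ha
            omega
          · exact h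
        have hyq : q ≤ y := by
          rcases lt_or_ge y q with h | h
          · rw [Nat.mod_eq_of_lt h] at hb
            omega
          · exact h
        by_cases hb1 : 1 ≤ b
        · set s2 := q + (a + b) - p with hs2
          refine ⟨(x - s2, y), Or.inl (Or.inl ⟨s2, by omega, by omega, by omega, rfl⟩), ?_⟩
          have hres : (x - s2) % q = p - b := by
            rw [subModGt (by omega) (by omega) (by omega)]
            omega
          show VV p q (x - s2) y = w
          rw [VVneg (by rw [hres]; rintro ⟨h, -⟩; omega), hres, ← hb]
          unfold gg
          have e1 : p - b + b = p * 1 + 0 := by omega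
          have e2 : (p - b) / p = 0 := Nat.div_eq_of_lt (by omega)
          have e3 : b / p = 0 := Nat.div_eq_of_lt (by omega)
          rw [e1, modp hp0 _ _ hp0, e2, e3, Nat.xor_self, Nat.mul_zero]
          omega
        · have ha1 : 1 ≤ a := by omega
          set t2 := q + a - p with ht2
          refine ⟨(x, y - t2), Or.inl (Or.inr ⟨t2, by omega, by omega, by omega, rfl⟩), ?_⟩
          have hres : (y - t2) % q = p - a := by
            rw [subModGt (by omega) (by omega) (by omega)]
            omega
          show VV p q x (y - t2) = w
          rw [VVneg (by rw [hres]; rintro ⟨-, h, -⟩; omega), hres, ← ha]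
          unfold gg
          have e1 : a + (p - a) = p * 1 + 0 := by omega
          have e2 : (p - a) / p = 0 := Nat.div_eq_of_lt (by omega)
          have e3 : a / p = 0 := Nat.div_eq_of_lt (by omega)
          rw [e1, modp hp0 _ _ hp0, e2, e3, Nat.xor_self, Nat.mul_zero]
          omega
      · -- unblocked : play the (s, t) reduction
        have hsx : s ≤ x := by omega
        have hty : t ≤ y := by omega
        have hVV : VV p q (x - s) (y - t) = w := by
          rw [VVneg (by rw [hres1, hres2]; exact hz), hres1, hres2]
          exact hval
        rcases Nat.eq_zero_or_pos s with hs0 | hs0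
        · refine ⟨(x, y - t), Or.inl (Or.inr ⟨t, by omega, hty, by omega, rfl⟩), ?_⟩
          show VV p q x (y - t) = w
          rw [show x - s = x by omega] at hVV
          exact hVV
        · rcases Nat.eq_zero_or_pos t with ht0 | ht0
          · refine ⟨(x - s, y), Or.inl (Or.inl ⟨s, hs0, hsx, by omega, rfl⟩), ?_⟩
            show VV p q (x - s) y = w
            rw [show y - t = y by omega] at hVV
            exact hVV
          · exact ⟨(x - s, y - t), Or.inr ⟨s, t, hs0, hsx, ht0, hty, by omega, rfl⟩, hVV⟩
    · -- nn > m : impossible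
      exfalso
      have h2 : p * (m + 1) ≤ p * nn := Nat.mul_le_mul_left p (by omega)
      have h3 : p * (m + 1) = p * m + p := by ring
      omega

private lemma moveLt {p q r : ℕ} {x y : ℕ} {z : ℕ × ℕ} (hz : z ∈ resMove p q r (x, y)) :
    z.1 + z.2 < x + y := by
  rcases hz with ((⟨s, h1, h2, h3, h4⟩ | ⟨t, h1, h2, h3, h4⟩) | ⟨s, t, h1, h2, h3, h4, h5, h6⟩)
  · rw [h4]; simp; omega
  · rw [h4]; simp; omega
  · rw [h6]; simp; omega

theorem stmt_13 (p q : ℕ) (hp : 3 ≤ p) (hq : 2 ≤ q) (hqp : q % p = 1)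
    (G : ℕ × ℕ → ℕ) (hG : ∀ pos : ℕ × ℕ, G pos = mex (G '' resMove p q q pos)) :
    ∀ x y : ℕ, G (x, y) =
      if x % q = 0 ∧ y % q = 0 ∧ x ≠ 0 ∧ y ≠ 0 then q
      else (x % q + y % q) % p + p * ((x % q / p) ^^^ (y % q / p)) := by
  have key : ∀ n x y, x + y = n → G (x, y) = VV p q x y := by
    intro n
    induction n using Nat.strong_induction_on with
    | _ n IH =>
      intro x y hxy
      rw [hG (x, y)]
      have himg : G '' resMove p q q (x, y) =
          (fun r : ℕ × ℕ => VV p q r.1 r.2) '' resMove p q q (x, y) := by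
        apply Set.image_congr
        intro r hr
        have hlt : r.1 + r.2 < x + y := moveLt hr
        have := IH (r.1 + r.2) (by omega) r.1 r.2 rfl
        simpa using this
      rw [himg]
      apply mexEq
      · rintro ⟨r, hr, hvr⟩
        exact keyI hp hq hqp x y r hr hvr
      · intro w hw
        obtain ⟨r, hr, hvr⟩ := keyII hp hq hqp x y w hw
        exact ⟨r, hr, hvr⟩
  intro x y
  rw [key (x + y) x y rfl]
  rfl
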